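/- Let D ⊂ ℤ be a finite nonempty set of nonzero integers, each congruent to 0 or 1 modulo 4, with the property that for every subset A ⊆ D of odd cardinality, the product ∏_{d∈A} d is not a perfect square. Then there exists a positive odd integer r such that for every d ∈ D, gcd(d, r) = 1 and the Jacobi symbol (d/r) equals −1. -/

import Mathlib

set_option linter.unusedVariables false


private def jind (x : ℤ) : ZMod 2 := if x = 1 then 0 else 1

private lemma jind_def (x : ℤ) : jind x = if x = 1 then 0 else 1 := rfl

private lemma jind_mul {x y : ℤ} (hx : x = 1 ∨ x = -1) (hy : y = 1 ∨ y = -1) :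
    jind (x * y) = jind x + jind y := by
  rcases hx with rfl | rfl <;> rcases hy with rfl | rfl <;> simp [jind] <;> decide

private lemma prod_pm {ι : Type*} {A : Finset ι} {g : ι → ℤ}
    (hg : ∀ i ∈ A, g i = 1 ∨ g i = -1) :
    (∏ i ∈ A, g i) = 1 ∨ (∏ i ∈ A, g i) = -1 := by
  classical
  induction A using Finset.cons_induction with
  | empty => simp
  | cons a s ha ih =>
    rw [Finset.prod_cons]
    have h1 := hg a (Finset.mem_cons_self a s)
    have h2 := ih (fun i hi => hg i (Finset.mem_cons_of_mem hi))
    rcases h1 with h1 | h1 <;> rcases h2 with h2 | h2 <;> rw [h1, h2] <;> norm_num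

private lemma jind_prod {ι : Type*} {A : Finset ι} {g : ι → ℤ}
    (hg : ∀ i ∈ A, g i = 1 ∨ g i = -1) :
    jind (∏ i ∈ A, g i) = ∑ i ∈ A, jind (g i) := by
  classical
  induction A using Finset.cons_induction with
  | empty => simp [jind]
  | cons a s ha ih =>
    rw [Finset.prod_cons, Finset.sum_cons,
      jind_mul (hg a (Finset.mem_cons_self a s)) (prod_pm fun i hi => hg i (Finset.mem_cons_of_mem hi)),
      ih (fun i hi => hg i (Finset.mem_cons_of_mem hi))]

private lemma crt_aux (L p : ℕ) (hL : L ≠ 0) (hp : p.Prime) (hp2 : p ≠ 2) (c np : ℕ)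
    (hc : c % 2 = 1) (hc8 : c < 8) (hnp : ¬ p ∣ np) :
    ∃ b : ℕ, b % 8 = c ∧ b % p = np % p ∧ Nat.Coprime b L ∧
      ∀ v : ℕ, v ∣ L → ¬ 2 ∣ v → ¬ p ∣ v → b % v = 1 % v := by
  set L₁ := ordCompl[2] (ordCompl[p] L) with hL₁def
  have hLp0 : ordCompl[p] L ≠ 0 := (Nat.ordCompl_pos p hL).ne'
  have h2L₁ : ¬ 2 ∣ L₁ := Nat.not_dvd_ordCompl Nat.prime_two hLp0
  have hdvd1 : L₁ ∣ ordCompl[p] L := Nat.ordCompl_dvd _ 2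
  have hpL₁ : ¬ p ∣ L₁ := fun h => Nat.not_dvd_ordCompl hp hL (h.trans hdvd1)
  have co2p : Nat.Coprime 2 p := (Nat.prime_two.coprime_iff_not_dvd).mpr
    (fun h => hp2 ((Nat.prime_dvd_prime_iff_eq Nat.prime_two hp).mp h).symm)
  have h8 : (8 : ℕ) = 2 ^ 3 := by norm_num
  have co8p : Nat.Coprime 8 p := by rw [h8]; exact co2p.pow_left 3
  have co8pL₁ : Nat.Coprime (8 * p) L₁ := by
    refine Nat.Coprime.mul ?_ ?_
    · rw [h8]
      exact (Nat.prime_two.coprime_iff_not_dvd.mpr h2L₁).pow_left 3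
    · exact hp.coprime_iff_not_dvd.mpr hpL₁
  obtain ⟨z, hz8, hzp⟩ := Nat.chineseRemainder co8p c np
  obtain ⟨b, hb8p, hbL₁⟩ := Nat.chineseRemainder co8pL₁ z 1
  have hb8 : b % 8 = c := by
    have h1 : b ≡ z [MOD 8] := (Nat.ModEq.of_dvd ⟨p, rfl⟩ hb8p)
    have := (h1.trans hz8)
    simpa [Nat.ModEq, Nat.mod_eq_of_lt hc8] using this
  have hbp : b % p = np % p := by
    have h1 : b ≡ z [MOD p] := (Nat.ModEq.of_dvd ⟨8, mul_comm 8 p⟩ hb8p)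
    exact h1.trans hzp
  have hbodd : b % 2 = 1 := by
    have h2 : b % 2 = (b % 8) % 2 := (Nat.mod_mod_of_dvd b (by norm_num)).symm
    rw [h2, hb8, hc]
  have hdvdL₁ : ∀ v : ℕ, v ∣ L → ¬ 2 ∣ v → ¬ p ∣ v → v ∣ L₁ := by
    intro v hvL hv2 hvp
    have cvp : Nat.Coprime v (ordProj[p] L) :=
      ((hp.coprime_iff_not_dvd.mpr hvp).symm.pow_right _)
    have h1 : v ∣ ordCompl[p] L := by
      have h := Nat.ordProj_mul_ordCompl_eq_self L p
      exact cvp.dvd_of_dvd_mul_left (by rw [h]; exact hvL)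
    have cv2 : Nat.Coprime v (ordProj[2] (ordCompl[p] L)) :=
      ((Nat.prime_two.coprime_iff_not_dvd.mpr hv2).symm.pow_right _)
    have h := Nat.ordProj_mul_ordCompl_eq_self (ordCompl[p] L) 2
    exact cv2.dvd_of_dvd_mul_left (by rw [h]; exact h1)
  have hmod1 : ∀ v : ℕ, v ∣ L → ¬ 2 ∣ v → ¬ p ∣ v → b % v = 1 % v := by
    intro v hvL hv2 hvp
    exact Nat.ModEq.of_dvd (hdvdL₁ v hvL hv2 hvp) hbL₁
  refine ⟨b, hb8, hbp, ?_, hmod1⟩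
  by_contra hco
  have hg1 : Nat.gcd b L ≠ 1 := hco
  set q := (Nat.gcd b L).minFac with hq
  have hqp : q.Prime := Nat.minFac_prime hg1
  have hqb : q ∣ b := (Nat.minFac_dvd _).trans (Nat.gcd_dvd_left _ _)
  have hqL : q ∣ L := (Nat.minFac_dvd _).trans (Nat.gcd_dvd_right _ _)
  rcases eq_or_ne q 2 with hq2 | hq2
  · rw [hq2] at hqb; omega
  rcases eq_or_ne q p with hqep | hqep
  · rw [hqep] at hqb
    have h0 : b % p = 0 := Nat.mod_eq_zero_of_dvd hqb
    rw [hbp] at h0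
    exact hnp (Nat.dvd_of_mod_eq_zero h0)
  · have hq2d : ¬ 2 ∣ q := fun h =>
      hq2 ((Nat.prime_dvd_prime_iff_eq Nat.prime_two hqp).mp h).symm
    have hqpd : ¬ p ∣ q := fun h =>
      hqep ((Nat.prime_dvd_prime_iff_eq hp hqp).mp h).symm
    have hbq : b % q = 1 % q := hmod1 q hqL hq2d hqpd
    have h1q : 1 % q = 1 := Nat.mod_eq_of_lt hqp.one_lt
    have h0 : b % q = 0 := Nat.mod_eq_zero_of_dvd hqb
    rw [hbq, h1q] at h0
    exact one_ne_zero h0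



private lemma key_nonsquare {m : ℤ} (hm : m ≠ 0) (hns : ¬ IsSquare m) {L : ℕ} (hL : L ≠ 0) :
    ∃ b : ℕ, Odd b ∧ Nat.Coprime b L ∧ jacobiSym m b = -1 := by
  obtain ⟨a, s, hprod, hsf⟩ := Nat.sq_mul_squarefree m.natAbs
  have hna : m.natAbs ≠ 0 := Int.natAbs_ne_zero.mpr hm
  have ha0 : a ≠ 0 := by rintro rfl; rw [mul_zero] at hprod; exact hna hprod.symm
  have hs0 : s ≠ 0 := by rintro rfl; rw [zero_pow two_ne_zero, zero_mul] at hprod; exact hna hprod.symm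
  -- extract the 2-part of a
  obtain ⟨e, u, hu_odd, hau, he01⟩ : ∃ e u, Odd u ∧ a = 2 ^ e * u ∧ (e = 0 ∨ e = 1) := by
    rcases Nat.even_or_odd a with hev | hod
    · obtain ⟨t, ht⟩ := hev
      refine ⟨1, t, ?_, by omega, Or.inr rfl⟩
      rcases Nat.even_or_odd t with h2 | h2
      · exfalso
        obtain ⟨w, hw⟩ := h2
        have h4 : 2 * 2 ∣ a := ⟨w, by omega⟩
        have := hsf 2 h4
        rw [Nat.isUnit_iff] at this; omega
      · exact h2
    · exact ⟨0, a, hod, by omega, Or.inl rfl⟩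
  have hu0 : u ≠ 0 := by rintro rfl; simp at hau; exact ha0 hau
  have hua : u ∣ a := ⟨2 ^ e, by rw [hau]; ring⟩
  have hu_sf : Squarefree u := hsf.squarefree_of_dvd hua
  have hsg : m.sign = 1 ∨ m.sign = -1 := by
    rcases lt_trichotomy m 0 with h | h | h
    · exact Or.inr (Int.sign_eq_neg_one_iff_neg.mpr h)
    · exact absurd h hm
    · exact Or.inl (Int.sign_eq_one_iff_pos.mpr h)
  have hmdec : m = m.sign * ((s : ℤ) ^ 2 * ((2 : ℤ) ^ e * (u : ℤ))) := by
    conv_lhs => rw [← Int.sign_mul_natAbs m]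
    rw [← hprod, hau]; push_cast; ring
  have hsna : s ∣ m.natAbs := ⟨s * a, by rw [← hprod]; ring⟩
  have hana : a ∣ m.natAbs := ⟨s ^ 2, by rw [← hprod]; ring⟩
  have hLm0 : L * m.natAbs ≠ 0 := mul_ne_zero hL hna
  -- generic work with a chosen (p, np, c)
  have main : ∀ p np c : ℕ, p.Prime → p ≠ 2 → ¬ p ∣ np → c % 2 = 1 → c < 8 →
      ∃ b : ℕ, b % 8 = c ∧ b % p = np % p ∧ Odd b ∧ Nat.Coprime b L ∧
        (s : ℤ).gcd b = 1 ∧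
        (∀ v : ℕ, v ∣ m.natAbs → ¬ 2 ∣ v → ¬ p ∣ v → b % v = 1 % v) := by
    intro p np c hp hp2 hnp hc hc8
    obtain ⟨b, hb8, hbp, hbco, hmodv⟩ := crt_aux (L * m.natAbs) p hLm0 hp hp2 c np hc hc8 hnp
    have hbodd : Odd b := by
      have h2 : b % 2 = (b % 8) % 2 := (Nat.mod_mod_of_dvd b (by norm_num)).symm
      rw [Nat.odd_iff, h2, hb8, hc]
    have hcoL : Nat.Coprime b L := hbco.coprime_dvd_right (dvd_mul_right L m.natAbs)
    have hcona : Nat.Coprime b m.natAbs := hbco.coprime_dvd_right (dvd_mul_left m.natAbs L)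
    have hgs : (s : ℤ).gcd b = 1 := by
      have : Nat.Coprime b s := hcona.coprime_dvd_right hsna
      simpa [Int.gcd_natCast_natCast] using this.symm
    exact ⟨b, hb8, hbp, hbodd, hcoL, hgs,
      fun v hv h2 hpv => hmodv v (hv.trans (dvd_mul_left m.natAbs L)) h2 hpv⟩
  rcases eq_or_ne u 1 with hu1 | hu1
  · -- u = 1 : m = ±s², ±2s²
    subst hu1
    -- not both sign = 1 and e = 0
    have hnot : ¬ (m.sign = 1 ∧ e = 0) := by
      rintro ⟨h1, h2⟩
      exact hns ⟨(s : ℤ), by rw [hmdec, h1, h2]; push_cast; ring⟩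
    set c : ℕ := if e = 0 then 3 else 5 with hcdef
    obtain ⟨b, hb8, _, hbodd, hcoL, hgs, _⟩ := main 3 1 c (by norm_num) (by norm_num)
      (by norm_num) (by rcases he01 with h | h <;> simp [hcdef, h]) 
      (by rcases he01 with h | h <;> simp [hcdef, h])
    refine ⟨b, hbodd, hcoL, ?_⟩
    have hJm : jacobiSym m b = jacobiSym m.sign b *
        (jacobiSym ((s : ℤ) ^ 2) b * (jacobiSym ((2 : ℤ) ^ e) b * jacobiSym ((1 : ℕ) : ℤ) b)) := by
      conv_lhs => rw [hmdec]
      rw [jacobiSym.mul_left, jacobiSym.mul_left, jacobiSym.mul_left]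
    have hs2 : jacobiSym ((s : ℤ) ^ 2) b = 1 := jacobiSym.sq_one' hgs
    have h1b : jacobiSym ((1 : ℕ) : ℤ) b = 1 := by norm_num
    rcases he01 with he | he
    · -- e = 0, so sign = -1, c = 3
      have hsgn : m.sign = -1 := by
        rcases hsg with h | h
        · exact absurd ⟨h, he⟩ hnot
        · exact h
      have hb4 : b % 4 = 3 := by
        have h4 : b % 4 = (b % 8) % 4 := (Nat.mod_mod_of_dvd b (by norm_num)).symm
        rw [h4, hb8, hcdef]; simp [he]
      have hneg : jacobiSym m.sign b = -1 := by
        rw [hsgn, jacobiSym.at_neg_one hbodd, ZMod.χ₄_nat_three_mod_four hb4]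
      rw [hJm, hneg, hs2, h1b, he]; norm_num
    · -- e = 1, c = 5
      have hb85 : b % 8 = 5 := by rw [hb8, hcdef]; simp [he]
      have hb4 : b % 4 = 1 := by
        have h4 : b % 4 = (b % 8) % 4 := (Nat.mod_mod_of_dvd b (by norm_num)).symm
        rw [h4, hb85]
      have hsgn1 : jacobiSym m.sign b = 1 := by
        rcases hsg with h | h
        · rw [h]; exact jacobiSym.one_left b
        · rw [h, jacobiSym.at_neg_one hbodd, ZMod.χ₄_nat_one_mod_four hb4]
      have h2b : jacobiSym ((2 : ℤ) ^ e) b = -1 := by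
        rw [he, pow_one, jacobiSym.at_two hbodd, ZMod.χ₈_nat_mod_eight, hb85]
        decide
      rw [hJm, hsgn1, hs2, h2b, h1b]; norm_num
  · -- u > 1
    have hu_gt : 1 < u := by omega
    set p := u.minFac with hpdef
    have hp : p.Prime := Nat.minFac_prime hu1
    have hpu : p ∣ u := Nat.minFac_dvd u
    have hp2 : p ≠ 2 := by
      intro h
      rw [Nat.odd_iff] at hu_odd
      have : (2 : ℕ) ∣ u := h ▸ hpu
      omega
    haveI : Fact p.Prime := ⟨hp⟩
    haveI : NeZero p := ⟨hp.pos.ne'⟩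
    obtain ⟨x, hx⟩ := FiniteField.exists_nonsquare (F := ZMod p)
      (by rw [ZMod.ringChar_zmod_n]; exact hp2)
    have hnp : ¬ p ∣ x.val := by
      intro h
      have hlt : x.val < p := ZMod.val_lt x
      have h0 : x.val = 0 := Nat.eq_zero_of_dvd_of_lt h hlt
      have hx0 : x = 0 := by
        have := ZMod.val_eq_zero (n := p) x
        exact this.mp h0
      exact hx (hx0 ▸ ⟨0, by simp⟩)
    obtain ⟨b, hb8, hbp, hbodd, hcoL, hgs, hmodv⟩ := main p x.val 1 hp hp2 hnp
      (by norm_num) (by norm_num)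
    refine ⟨b, hbodd, hcoL, ?_⟩
    have hb4 : b % 4 = 1 := by
      have h4 : b % 4 = (b % 8) % 4 := (Nat.mod_mod_of_dvd b (by norm_num)).symm
      rw [h4, hb8]
    have hJm : jacobiSym m b = jacobiSym m.sign b *
        (jacobiSym ((s : ℤ) ^ 2) b * (jacobiSym ((2 : ℤ) ^ e) b * jacobiSym (u : ℤ) b)) := by
      conv_lhs => rw [hmdec]
      rw [jacobiSym.mul_left, jacobiSym.mul_left, jacobiSym.mul_left]
    have hsgn1 : jacobiSym m.sign b = 1 := by
      rcases hsg with h | h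
      · rw [h]; exact jacobiSym.one_left b
      · rw [h, jacobiSym.at_neg_one hbodd, ZMod.χ₄_nat_one_mod_four hb4]
    have hs2 : jacobiSym ((s : ℤ) ^ 2) b = 1 := jacobiSym.sq_one' hgs
    have h2b : jacobiSym ((2 : ℤ) ^ e) b = 1 := by
      rw [jacobiSym.pow_left, jacobiSym.at_two hbodd, ZMod.χ₈_nat_mod_eight, hb8]
      norm_num
    -- reciprocity
    have hrec : jacobiSym (u : ℤ) b = jacobiSym (b : ℤ) u :=
      jacobiSym.quadratic_reciprocity_one_mod_four' hu_odd hb4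
    set v := u / p with hvdef
    have hupv : u = p * v := (Nat.mul_div_cancel' hpu).symm
    have hv0 : v ≠ 0 := by
      intro h
      rw [h, mul_zero] at hupv
      exact hu0 hupv
    have hpv : ¬ p ∣ v := by
      intro h
      obtain ⟨w, hw⟩ := h
      have : p * p ∣ u := ⟨w, by rw [hupv, hw]; ring⟩
      exact hp.not_isUnit (hu_sf p this)
    have hsplit : jacobiSym (b : ℤ) u = jacobiSym (b : ℤ) p * jacobiSym (b : ℤ) v := by
      rw [hupv]; exact jacobiSym.mul_right' (b : ℤ) hp.pos.ne' hv0
    have hJbp : jacobiSym (b : ℤ) p = -1 := by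
      rw [← jacobiSym.legendreSym.to_jacobiSym]
      rw [legendreSym.eq_neg_one_iff']
      have hbx : ((b : ℕ) : ZMod p) = x := by
        rw [← ZMod.natCast_mod b p, hbp, ZMod.natCast_mod, ZMod.natCast_rightInverse x]
      rw [hbx]; exact hx
    have hJbv : jacobiSym (b : ℤ) v = 1 := by
      have hvu : v ∣ u := ⟨p, by rw [hupv]; ring⟩
      have hv2 : ¬ 2 ∣ v := by
        intro h
        rw [Nat.odd_iff] at hu_odd
        have : (2 : ℕ) ∣ u := h.trans hvu
        omega
      have hmv : b % v = 1 % v := hmodv v ((hvu.trans hua).trans hana) hv2 hpv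
      have hmvz : (b : ℤ) % v = (1 : ℤ) % v := by exact_mod_cast congrArg (Nat.cast (R := ℤ)) hmv
      rw [jacobiSym.mod_left' hmvz, jacobiSym.one_left]
    rw [hJm, hsgn1, hs2, h2b, hrec, hsplit, hJbp, hJbv]; norm_num

/-- Mallet-Paret–Sell lemma: if `D` is a finite nonempty set of nonzero integers
`≡ 0, 1 (mod 4)` such that no odd-cardinality subset has square product, then there
is a positive odd integer `r` coprime to each `d ∈ D` with Jacobi symbol `(d/r) = -1`. -/


theorem exists_jacobi_neg_one (D : Finset ℤ) (hne : D.Nonempty)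
    (hD : ∀ d ∈ D, d ≠ 0 ∧ (d % 4 = 0 ∨ d % 4 = 1))
    (hsq : ∀ A ⊆ D, Odd A.card → ¬ IsSquare (∏ d ∈ A, d)) :
    ∃ r : ℕ, 0 < r ∧ Odd r ∧ ∀ d ∈ D, Int.gcd d (r : ℤ) = 1 ∧ jacobiSym d r = -1 := by
  classical
  set P : ℕ := ∏ d ∈ D, d.natAbs with hPdef
  set M : ℕ := 8 * P with hMdef
  have hP0 : P ≠ 0 :=
    Finset.prod_ne_zero_iff.mpr fun d hd => Int.natAbs_ne_zero.mpr (hD d hd).1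
  have hM0 : M ≠ 0 := mul_ne_zero (by norm_num) hP0
  have hM1 : 1 < M := by
    have : 1 ≤ P := Nat.one_le_iff_ne_zero.mpr hP0
    calc 1 < 8 * 1 := by norm_num
    _ ≤ 8 * P := by exact Nat.mul_le_mul_left 8 this
  haveI : NeZero M := ⟨hM0⟩
  have hdP : ∀ d ∈ D, d.natAbs ∣ P := fun d hd => Finset.dvd_prod_of_mem _ hd
  have hdM : ∀ d ∈ D, 4 * d.natAbs ∣ M := fun d hd =>
    mul_dvd_mul (by norm_num : (4:ℕ) ∣ 8) (hdP d hd)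
  have per : ∀ d ∈ D, ∀ x y : ℕ, Odd x → Odd y → x % M = y % M →
      jacobiSym d x = jacobiSym d y := by
    intro d hd x y hx hy hxy
    rw [jacobiSym.mod_right d hx, jacobiSym.mod_right d hy]
    congr 1
    exact Nat.ModEq.of_dvd (hdM d hd) hxy
  have hvodd : ∀ r : (ZMod M)ˣ, Odd (ZMod.val (r : ZMod M)) := by
    intro r
    have hco := ZMod.val_coe_unit_coprime r
    rw [Nat.odd_iff]
    by_contra h
    have h2v : 2 ∣ ZMod.val (r : ZMod M) := by omega
    have h2M : 2 ∣ M := ⟨4 * P, by rw [hMdef]; ring⟩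
    have h2g : 2 ∣ Nat.gcd (ZMod.val (r : ZMod M)) M := Nat.dvd_gcd h2v h2M
    rw [hco] at h2g
    omega
  have hgcd1 : ∀ d ∈ D, ∀ b : ℕ, Nat.Coprime b M → Int.gcd d (b : ℤ) = 1 := by
    intro d hd b hb
    have h1 : Nat.Coprime b d.natAbs :=
      hb.coprime_dvd_right ((hdP d hd).trans (dvd_mul_left P 8))
    simpa [Int.gcd] using h1.symm
  have hpm : ∀ d ∈ D, ∀ b : ℕ, Nat.Coprime b M →
      (jacobiSym d b = 1 ∨ jacobiSym d b = -1) := fun d hd b hb =>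
    jacobiSym.eq_one_or_neg_one (hgcd1 d hd b hb)
  -- the sign vector map
  set vec : (ZMod M)ˣ → ({d // d ∈ D} → ZMod 2) :=
    fun r i => jind (jacobiSym i.1 (ZMod.val (r : ZMod M))) with hvecdef
  have hvec_one : vec 1 = 0 := by
    funext i
    haveI : Fact (1 < M) := ⟨hM1⟩
    have hv1 : ZMod.val ((1 : (ZMod M)ˣ) : ZMod M) = 1 := by
      rw [Units.val_one, ZMod.val_one]
    simp only [hvecdef, hv1, jacobiSym.one_right, jind_def, if_pos rfl]
    rfl
  have hvec_mul : ∀ r t : (ZMod M)ˣ, vec (r * t) = vec r + vec t := by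
    intro r t
    funext i
    have hvr0 : ZMod.val (r : ZMod M) ≠ 0 := by
      have := hvodd r; rw [Nat.odd_iff] at this; omega
    have hvt0 : ZMod.val (t : ZMod M) ≠ 0 := by
      have := hvodd t; rw [Nat.odd_iff] at this; omega
    have hval : ZMod.val ((↑(r * t)) : ZMod M) % M =
        (ZMod.val (r : ZMod M) * ZMod.val (t : ZMod M)) % M := by
      rw [Units.val_mul, ZMod.val_mul, Nat.mod_mod_of_dvd _ dvd_rfl]
    have hoddprod : Odd (ZMod.val (r : ZMod M) * ZMod.val (t : ZMod M)) :=
      (hvodd r).mul (hvodd t)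
    have h1 : jacobiSym i.1 (ZMod.val ((↑(r * t)) : ZMod M)) =
        jacobiSym i.1 (ZMod.val (r : ZMod M) * ZMod.val (t : ZMod M)) :=
      per i.1 i.2 _ _ (hvodd (r * t)) hoddprod hval
    show jind _ = vec r i + vec t i
    rw [h1, jacobiSym.mul_right' i.1 hvr0 hvt0]
    exact jind_mul (hpm i.1 i.2 _ (ZMod.val_coe_unit_coprime r))
      (hpm i.1 i.2 _ (ZMod.val_coe_unit_coprime t))
  set W : Submodule (ZMod 2) ({d // d ∈ D} → ZMod 2) :=
    { carrier := Set.range vec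
      add_mem' := by
        rintro _ _ ⟨r, rfl⟩ ⟨t, rfl⟩
        exact ⟨r * t, hvec_mul r t⟩
      zero_mem' := ⟨1, hvec_one⟩
      smul_mem' := by
        intro c x hx
        rcases (by decide : ∀ z : ZMod 2, z = 0 ∨ z = 1) c with rfl | rfl
        · rw [zero_smul]; exact ⟨1, hvec_one⟩
        · rw [one_smul]; exact hx } with hWdef
  by_cases hv0 : (fun _ => 1 : {d // d ∈ D} → ZMod 2) ∈ W
  · obtain ⟨r, hr⟩ := hv0
    refine ⟨ZMod.val (r : ZMod M), ?_, hvodd r, ?_⟩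
    · have := hvodd r; rw [Nat.odd_iff] at this; omega
    intro d hd
    have hco := ZMod.val_coe_unit_coprime r
    refine ⟨hgcd1 d hd _ hco, ?_⟩
    have hri : vec r ⟨d, hd⟩ = 1 := congrFun hr ⟨d, hd⟩
    rcases hpm d hd _ hco with h | h
    · exfalso
      rw [hvecdef] at hri
      simp only [h, jind_def, if_pos rfl] at hri
      exact (by decide : (0 : ZMod 2) ≠ 1) hri
    · exact h
  · exfalso
    obtain ⟨f, hf0, hfW⟩ := W.exists_dual_map_eq_bot_of_notMem hv0 inferInstance
    have hfW' : ∀ x ∈ W, f x = 0 := by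
      intro x hx
      have : f x ∈ W.map f := Submodule.mem_map_of_mem hx
      rwa [hfW, Submodule.mem_bot] at this
    set A : Finset {d // d ∈ D} :=
      Finset.univ.filter (fun i => f (Pi.single i 1) = 1) with hA
    have hsumf : ∀ x, f x = ∑ i ∈ A, x i := by
      intro x
      have hxdec : x = ∑ i : {d // d ∈ D}, Pi.single i (x i) := by
        funext j
        rw [Finset.sum_apply]
        simp [Pi.single_apply]
      conv_lhs => rw [hxdec]
      rw [map_sum]
      have hterm : ∀ i, f (Pi.single i (x i)) = x i * f (Pi.single i 1) := by
        intro i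
        rcases (by decide : ∀ z : ZMod 2, z = 0 ∨ z = 1) (x i) with h | h
        · rw [h, Pi.single_zero, map_zero, zero_mul]
        · rw [h, one_mul]
      rw [Finset.sum_congr rfl fun i _ => hterm i, hA, Finset.sum_filter]
      refine Finset.sum_congr rfl fun i _ => ?_
      rcases (by decide : ∀ z : ZMod 2, z = 0 ∨ z = 1) (f (Pi.single i 1)) with h | h
      · rw [h, mul_zero]; simp
      · rw [h, mul_one]; simp
    have hfv1 : f (fun _ => 1) = (A.card : ZMod 2) := by
      rw [hsumf]
      simp [Finset.sum_const, nsmul_eq_mul]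
    have hAodd : Odd A.card := by
      rw [← Nat.not_even_iff_odd]
      intro hev
      rw [Nat.even_iff] at hev
      have : (A.card : ZMod 2) = 0 := (ZMod.natCast_eq_zero_iff _ _).mpr (by omega)
      rw [hfv1, this] at hf0
      exact hf0 rfl
    set A' : Finset ℤ := A.image (fun i : {d // d ∈ D} => (i : ℤ)) with hA'
    have hsub : A' ⊆ D := by
      intro d hd
      rw [hA', Finset.mem_image] at hd
      obtain ⟨i, _, rfl⟩ := hd
      exact i.2
    have hcard : A'.card = A.card := Finset.card_image_of_injective A Subtype.val_injective
    set m : ℤ := ∏ i ∈ A, (i : ℤ) with hmdef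
    have hmprod : ∏ d ∈ A', d = m := by
      rw [hA', hmdef]
      exact Finset.prod_image fun x _ y _ h => Subtype.ext h
    have hm0 : m ≠ 0 := Finset.prod_ne_zero_iff.mpr fun i _ => (hD i.1 i.2).1
    have hns : ¬ IsSquare m := by
      rw [← hmprod]
      exact hsq A' hsub (hcard ▸ hAodd)
    obtain ⟨b, hbodd, hbco, hbJ⟩ := key_nonsquare hm0 hns hM0
    set r : (ZMod M)ˣ := ZMod.unitOfCoprime b hbco with hrdef
    have hval : ZMod.val (r : ZMod M) % M = b % M := by
      rw [hrdef, ZMod.coe_unitOfCoprime, ZMod.val_natCast, Nat.mod_mod_of_dvd _ dvd_rfl]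
    have hJeq : ∀ i : {d // d ∈ D},
        jacobiSym i.1 (ZMod.val (r : ZMod M)) = jacobiSym i.1 b :=
      fun i => per i.1 i.2 _ _ (hvodd r) hbodd hval
    have hfvec : f (vec r) = 0 := hfW' _ ⟨r, rfl⟩
    rw [hsumf] at hfvec
    have hsum : ∑ i ∈ A, jind (jacobiSym i.1 b) = 0 := by
      rw [← hfvec]
      exact Finset.sum_congr rfl fun i _ => by simp only [hvecdef]; rw [hJeq i]
    have hpmA : ∀ i ∈ A, jacobiSym i.1 b = 1 ∨ jacobiSym i.1 b = -1 :=
      fun i _ => hpm i.1 i.2 b hbco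
    have hprod1 : ∏ i ∈ A, jacobiSym i.1 b = 1 := by
      rcases prod_pm hpmA with h | h
      · exact h
      · exfalso
        have hjp := jind_prod hpmA
        rw [hsum, h, jind_def] at hjp
        simp only [if_neg (by norm_num : (-1 : ℤ) ≠ 1)] at hjp
        exact (by decide : (1 : ZMod 2) ≠ 0) hjp
    have hJprod : jacobiSym m b = ∏ i ∈ A, jacobiSym i.1 b := by
      rw [hmdef]
      let jh : ℤ →* ℤ :=
        { toFun := fun z => jacobiSym z b
          map_one' := jacobiSym.one_left b
          map_mul' := fun x y => jacobiSym.mul_left x y b }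
      exact map_prod jh _ A
    rw [hJprod, hprod1] at hbJ
    norm_num at hbJ
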